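/- arXiv:2011.09717 — 3 statements merged into one kernel-verified Lean document; each statement's English description precedes it below -/
import Mathlib

section
/- Let n ≥ 3 and let Γ be a symmetric clustering game with c = 2 colors on the cycle H with vertices 1,…,n and edges {i, i+1} (indices modulo n). Suppose that for every strategy profile s and every player i, the color k ∈ {1,2} that makes the edge {i, i+1} satisfied (given s_{i+1}) is a best response for player i, i.e., u_i(s_{-i},k) ≥ u_i(s_{-i},k') where k' is the other color. Then there exist T ≥ 1 and a cyclic sequence of profiles s^0, s^1, …, s^T with s^T = s^0 such that for each t, s^{t+1} differs from s^t in exactly one player i, and the new color s^{t+1}_i ≠ s^t_i is a best response for player i in s^t; hence there exists a best-response sequence that does not converge to a pure Nash equilibrium. -/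
open Finset
open scoped Classical

variable {V : Type*}

noncomputable def edgesIn [Fintype V] (G : SimpleGraph V) (S : Finset V) : ℕ :=
  (G.edgeFinset.filter fun e => ∀ v ∈ e, v ∈ S).card

noncomputable def maxDensity [Fintype V] (G : SimpleGraph V) : ℝ :=
  ⨆ S : {S : Finset V // S.Nonempty}, (edgesIn G S.1 : ℝ) / (S.1.card : ℝ)

noncomputable def maxDisparity (G : SimpleGraph V) (α : V → V → ℝ) : ℝ :=
  ⨆ p : {p : V × V // G.Adj p.1 p.2}, α p.1.1 p.1.2 / α p.1.2 p.1.1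

noncomputable def util [Fintype V] (G : SimpleGraph V) (coord : V → V → Prop)
    (α w : V → V → ℝ) {c : ℕ} (q : V → Fin c → ℝ) (s : V → Fin c) (i : V) : ℝ :=
  q i (s i) +
    ∑ j ∈ G.neighborFinset i,
      if (coord i j ∧ s i = s j) ∨ (¬ coord i j ∧ s i ≠ s j)
      then α i j / (α i j + α j i) * w i j else 0

noncomputable def welfare [Fintype V] (G : SimpleGraph V) (coord : V → V → Prop)
    (α w : V → V → ℝ) {c : ℕ} (q : V → Fin c → ℝ) (s : V → Fin c) : ℝ :=
  ∑ i, util G coord α w q s i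

def IsNash [Fintype V] (G : SimpleGraph V) (coord : V → V → Prop)
    (α w : V → V → ℝ) {c : ℕ} (q : V → Fin c → ℝ) (s : V → Fin c) : Prop :=
  ∀ (i : V) (k : Fin c),
    util G coord α w q (Function.update s i k) i ≤ util G coord α w q s i

noncomputable def utilA [Fintype V] (G : SimpleGraph V) (w : V → V → ℝ)
    {c : ℕ} (s : V → Fin c) (i : V) : ℝ :=
  ∑ j ∈ G.neighborFinset i, if s i = s j then w i j / 2 else 0

noncomputable def welfareA [Fintype V] (G : SimpleGraph V) (w : V → V → ℝ)
    {c : ℕ} (s : V → Fin c) : ℝ :=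
  ∑ i, utilA G w s i

def IsNashA [Fintype V] (G : SimpleGraph V) (w : V → V → ℝ)
    {c : ℕ} (St : V → Finset (Fin c)) (s : V → Fin c) : Prop :=
  ∀ i, ∀ k ∈ St i, utilA G w (Function.update s i k) i ≤ utilA G w s i

def IsEpsKEq [Fintype V] (G : SimpleGraph V) (w : V → V → ℝ)
    {c : ℕ} (St : V → Finset (Fin c)) (ε : ℝ) (k : ℕ) (s : V → Fin c) : Prop :=
  ∀ K : Finset V, K.Nonempty → K.card ≤ k →
    ∀ s' : V → Fin c, (∀ i ∈ K, s' i ∈ St i) → (∀ i ∉ K, s' i = s i) →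
      ∃ j ∈ K, utilA G w s' j ≤ ε * utilA G w s j

def IsGWS (G : SimpleGraph V) (α : V → V → ℝ) : Prop :=
  ∃ (σ : V → ℕ) (γ : V → ℝ), Function.Injective σ ∧ (∀ i, 0 ≤ γ i) ∧
    ∀ i j, G.Adj i j →
      (α i j = 0 → σ i < σ j) ∧
      (0 < α i j → α i j / (α i j + α j i) = γ i / (γ i + γ j))

def BRStep [Fintype V] (G : SimpleGraph V) (coord : V → V → Prop)
    (α w : V → V → ℝ) {c : ℕ} (q : V → Fin c → ℝ) (s s' : V → Fin c) : Prop :=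
  ∃ i, (∀ j, j ≠ i → s' j = s j) ∧
    util G coord α w q s i < util G coord α w q s' i ∧
    ∀ k : Fin c, util G coord α w q (Function.update s i k) i ≤ util G coord α w q s' i

open Finset
open scoped Classical
open Fin.CommRing

namespace Stmt16A

lemma fin2_succ_of_ne : ∀ a b : Fin 2, a ≠ b → a + 1 = b := by decide
lemma fin2_succ_ne : ∀ a : Fin 2, a + 1 ≠ a := by decide
lemma fin2_aa : ∀ a : Fin 2, a + 1 + 1 = a := by decide
lemma fin2_eq_add_self_iff : ∀ a c : Fin 2, (a = c + a) ↔ c = 0 := by decide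

def seq {n : ℕ} (s0 : Fin n → Fin 2) (v : ℕ → Fin n) : ℕ → Fin n → Fin 2
  | 0 => s0
  | (t+1) => Function.update (seq s0 v t) (v t) (seq s0 v t (v t) + 1)

def SatP {n : ℕ} [NeZero n] (g s : Fin n → Fin 2) (i : Fin n) : Prop :=
  s i = s (i + 1) + g i

variable {n : ℕ} [NeZero n]

lemma one_ne_zero' (h3 : 3 ≤ n) : (1 : Fin n) ≠ 0 := by
  intro hh; rw [Fin.ext_iff, Fin.val_one', Fin.val_zero,
    Nat.mod_eq_of_lt (show 1 < n by omega)] at hh; omega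

lemma two_ne_zero' (h3 : 3 ≤ n) : (1 + 1 : Fin n) ≠ 0 := by
  intro hh; rw [Fin.ext_iff, Fin.val_add, Fin.val_one', Fin.val_zero,
    Nat.mod_eq_of_lt (show 1 < n by omega),
    Nat.mod_eq_of_lt (show 1+1 < n by omega)] at hh
  omega

lemma sub_one_ne (h3 : 3 ≤ n) (v : Fin n) : v - 1 ≠ v := by
  intro hh
  have h1 : v + 0 = v + 1 := by rw [add_zero]; exact sub_eq_iff_eq_add.mp hh
  exact one_ne_zero' h3 (add_left_cancel h1).symm

lemma add_one_ne (h3 : 3 ≤ n) (v : Fin n) : v + 1 ≠ v := by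
  intro hh
  have h2 : v + 1 = v + 0 := by rw [add_zero]; exact hh
  exact one_ne_zero' h3 (add_left_cancel h2)

lemma neg_cast_succ_ne (h3 : 3 ≤ n) (m : ℕ) :
    -(((m+1 : ℕ)) : Fin n) ≠ -((m : ℕ) : Fin n) := by
  intro hh
  apply one_ne_zero' h3
  have h1 : ((m : Fin n)) + 1 = (m : Fin n) + 0 := by
    rw [add_zero]
    have := neg_injective hh
    push_cast at this
    exact this
  exact add_left_cancel h1

lemma neg_cast_two_ne (h3 : 3 ≤ n) (m : ℕ) :
    -(((m+2 : ℕ)) : Fin n) ≠ -((m : ℕ) : Fin n) := by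
  intro hh
  apply two_ne_zero' h3
  have h1 : ((m : Fin n)) + (1 + 1) = (m : Fin n) + 0 := by
    rw [add_zero]
    have := neg_injective hh
    push_cast at this
    rw [one_add_one_eq_two]
    simpa using this
  exact add_left_cancel h1

lemma neg_one_val (h3 : 3 ≤ n) : ((-1 : Fin n)).val = n - 1 := by
  rw [Fin.neg_def, Fin.val_mk, Fin.val_one',
    Nat.mod_eq_of_lt (show 1 < n by omega), Nat.mod_eq_of_lt (by omega)]

lemma zero_ne_neg_one (h3 : 3 ≤ n) : (0 : Fin n) ≠ -1 := by
  intro hh; rw [Fin.ext_iff, Fin.val_zero, neg_one_val h3] at hh; omega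

section flip
variable (g s : Fin n → Fin 2) (v : Fin n)

lemma sat_flip_self (h3 : 3 ≤ n) :
    SatP g (Function.update s v (s v + 1)) v ↔ ¬ SatP g s v := by
  unfold SatP
  rw [Function.update_self, Function.update_of_ne (add_one_ne h3 v)]
  generalize s v = a; generalize s (v+1) + g v = c
  revert a c; decide

lemma sat_flip_pred (h3 : 3 ≤ n) :
    SatP g (Function.update s v (s v + 1)) (v - 1) ↔ ¬ SatP g s (v - 1) := by
  unfold SatP
  rw [sub_add_cancel, Function.update_of_ne (sub_one_ne h3 v), Function.update_self]
  generalize s (v-1) = a; generalize s v = c; generalize g (v-1) = d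
  revert a c d; decide

lemma sat_flip_other (i : Fin n) (hi : i ≠ v) (hi' : i ≠ v - 1) :
    SatP g (Function.update s v (s v + 1)) i ↔ SatP g s i := by
  unfold SatP
  have hh : i + 1 ≠ v := fun hh => hi' (by rw [← hh]; ring)
  rw [Function.update_of_ne hi, Function.update_of_ne hh]

end flip

noncomputable def bfun (g : Fin n → Fin 2) : Fin n → Fin 2 :=
  fun i => ∑ j ∈ Finset.univ.filter (fun j : Fin n => i.val ≤ j.val), g j

lemma bfun_rec (g : Fin n → Fin 2) (i : Fin n) (hi : i.val + 1 < n) :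
    bfun g i = bfun g (i+1) + g i := by
  have hval : (i+1).val = i.val + 1 := by
    rw [Fin.val_add, Fin.val_one', Nat.mod_eq_of_lt (show 1 < n by omega),
      Nat.mod_eq_of_lt hi]
  have hset : Finset.univ.filter (fun j : Fin n => i.val ≤ j.val)
      = insert i (Finset.univ.filter (fun j : Fin n => (i+1).val ≤ j.val)) := by
    ext j
    simp only [Finset.mem_insert, Finset.mem_filter, Finset.mem_univ, true_and, hval,
      Fin.ext_iff]
    omega
  unfold bfun
  rw [hset, Finset.sum_insert (by simp [hval])]
  exact add_comm _ _

lemma bfun_last (h3 : 3 ≤ n) (g : Fin n → Fin 2) : bfun g (-1) = g (-1) := by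
  have hset : Finset.univ.filter (fun j : Fin n => ((-1 : Fin n)).val ≤ j.val)
      = {(-1 : Fin n)} := by
    ext j
    simp only [Finset.mem_filter, Finset.mem_univ, true_and, Finset.mem_singleton,
      Fin.ext_iff, neg_one_val h3]
    omega
  unfold bfun
  rw [hset, Finset.sum_singleton]

lemma bfun_zero (g : Fin n → Fin 2) : bfun g 0 = ∑ j, g j := by
  unfold bfun
  congr 1
  ext j; simp

lemma ne_neg_one_val (h3 : 3 ≤ n) (i : Fin n) (hi : i ≠ -1) : i.val + 1 < n := by
  have := i.isLt
  rcases Nat.lt_or_ge (i.val + 1) n with h | h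
  · exact h
  · exfalso; apply hi; rw [Fin.ext_iff, neg_one_val h3]; omega

lemma bfun_sat (h3 : 3 ≤ n) (g : Fin n → Fin 2) (i : Fin n) (hi : i ≠ -1) :
    SatP g (bfun g) i :=
  bfun_rec g i (ne_neg_one_val h3 i hi)

lemma bfun_last_sat (h3 : 3 ≤ n) (g : Fin n → Fin 2) :
    SatP g (bfun g) (-1) ↔ (∑ j, g j) = 0 := by
  unfold SatP
  rw [neg_add_cancel, bfun_last h3 g, bfun_zero g]
  exact fin2_eq_add_self_iff _ _

lemma neg_cast_val (h3 : 3 ≤ n) (t : ℕ) (h : t + 1 ≤ n) :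
    ((-(((t:ℕ)+1 : ℕ) : Fin n)) : Fin n).val = n - (t+1) := by
  have hcast : (((t:ℕ)+1 : ℕ) : Fin n).val = (t+1) % n := Fin.val_natCast _ _
  rw [Fin.neg_def, Fin.val_mk, hcast]
  rcases eq_or_lt_of_le h with h1 | h1
  · rw [← h1, Nat.mod_self, Nat.sub_zero, Nat.mod_self]; omega
  · rw [Nat.mod_eq_of_lt h1, Nat.mod_eq_of_lt (by omega)]

end Stmt16A

theorem stmt16 (n : ℕ) (hn : 3 ≤ n) [NeZero n]
    (coord : Fin n → Fin n → Prop) (hcoord : ∀ i j, coord i j ↔ coord j i)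
    (α w : Fin n → Fin n → ℝ) (q : Fin n → Fin 2 → ℝ)
    (hα0 : ∀ i j, 0 ≤ α i j)
    (hαs : ∀ i j, (SimpleGraph.cycleGraph n).Adj i j → 0 < α i j + α j i)
    (hw : ∀ i j, 0 ≤ w i j) (hwsymm : ∀ i j, w i j = w j i)
    (hq : ∀ i k, 0 ≤ q i k)
    (hBR : ∀ (s : Fin n → Fin 2) (i : Fin n) (k : Fin 2),
      ((coord i (i + 1) ∧ k = s (i + 1)) ∨ (¬ coord i (i + 1) ∧ k ≠ s (i + 1))) →
      ∀ k' : Fin 2,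
        util (SimpleGraph.cycleGraph n) coord α w q (Function.update s i k') i ≤
          util (SimpleGraph.cycleGraph n) coord α w q (Function.update s i k) i) :
    ∃ (T : ℕ) (f : ℕ → Fin n → Fin 2), 1 ≤ T ∧ f T = f 0 ∧
      ∀ t < T, ∃ i : Fin n,
        f (t + 1) i ≠ f t i ∧ (∀ j, j ≠ i → f (t + 1) j = f t j) ∧
        ∀ k' : Fin 2,
          util (SimpleGraph.cycleGraph n) coord α w q (Function.update (f t) i k') i ≤
            util (SimpleGraph.cycleGraph n) coord α w q (f (t + 1)) i := by
  classical
  have h3 := hn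
  set g : Fin n → Fin 2 := fun i => if coord i (i+1) then (0:Fin 2) else 1 with hgdef
  have key : ∀ (s : Fin n → Fin 2) (i : Fin n), ¬ Stmt16A.SatP g s i →
      ∀ k' : Fin 2, util (SimpleGraph.cycleGraph n) coord α w q (Function.update s i k') i ≤
        util (SimpleGraph.cycleGraph n) coord α w q (Function.update s i (s i + 1)) i := by
    intro s i h k'
    have hk : s i + 1 = s (i+1) + g i := Stmt16A.fin2_succ_of_ne _ _ h
    refine hBR s i (s i + 1) ?_ k'
    by_cases hc : coord i (i+1)
    · left
      refine ⟨hc, ?_⟩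
      rw [hk, hgdef]
      simp [hc]
    · right
      refine ⟨hc, ?_⟩
      rw [hk, hgdef]
      simp only [if_neg hc]
      exact Stmt16A.fin2_succ_ne _
  have assemble : ∀ (s0 : Fin n → Fin 2) (v : ℕ → Fin n) (T : ℕ), 1 ≤ T →
      Stmt16A.seq s0 v T = Stmt16A.seq s0 v 0 →
      (∀ t, t < T → ¬ Stmt16A.SatP g (Stmt16A.seq s0 v t) (v t)) →
      (∃ (T : ℕ) (f : ℕ → Fin n → Fin 2), 1 ≤ T ∧ f T = f 0 ∧
        ∀ t < T, ∃ i : Fin n,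
          f (t + 1) i ≠ f t i ∧ (∀ j, j ≠ i → f (t + 1) j = f t j) ∧
          ∀ k' : Fin 2,
            util (SimpleGraph.cycleGraph n) coord α w q (Function.update (f t) i k') i ≤
              util (SimpleGraph.cycleGraph n) coord α w q (f (t + 1)) i) := by
    intro s0 v T hT hper hleg
    refine ⟨T, Stmt16A.seq s0 v, hT, hper, ?_⟩
    intro t ht
    have hstep : Stmt16A.seq s0 v (t+1)
        = Function.update (Stmt16A.seq s0 v t) (v t) (Stmt16A.seq s0 v t (v t) + 1) := rfl
    refine ⟨v t, ?_, ?_, ?_⟩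
    · rw [hstep, Function.update_self]; exact Stmt16A.fin2_succ_ne _
    · intro j hj; rw [hstep, Function.update_of_ne hj]
    · intro k'
      rw [hstep]
      exact key _ _ (hleg t ht) k'
  set b := Stmt16A.bfun g with hbdef
  by_cases hS : (∑ j, g j) = (0 : Fin 2)
  · -- even parity: two rotating defects
    set s0 := Function.update b 0 (b 0 + 1) with hs0def
    set v : ℕ → Fin n :=
      fun t => if t % 2 = 0 then -((t/2 + 1 : ℕ) : Fin n) else -((t/2 : ℕ) : Fin n) with hvdef
    set f := Stmt16A.seq s0 v with hfdef
    have hstep : ∀ t, f (t+1) = Function.update (f t) (v t) (f t (v t) + 1) := fun t => rfl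
    set e1 : ℕ → Fin n := fun t => -((t/2 + 1 + t % 2 : ℕ) : Fin n) with he1def
    set e2 : ℕ → Fin n := fun t => -((t/2 : ℕ) : Fin n) with he2def
    have inv : ∀ t (i : Fin n), ¬ Stmt16A.SatP g (f t) i ↔ (i = e1 t ∨ i = e2 t) := by
      intro t
      induction t with
      | zero =>
        intro i
        have he10 : e1 0 = -1 := by simp only [he1def]; norm_num
        have he20 : e2 0 = 0 := by simp only [he2def]; norm_num
        rw [he10, he20]
        have hflip : f 0 = Function.update b 0 (b 0 + 1) := rfl
        rw [hflip]
        rcases eq_or_ne i (0 : Fin n) with rfl | hi0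
        · refine iff_of_true ?_ (Or.inr rfl)
          rw [Stmt16A.sat_flip_self g b 0 h3, not_not]
          exact Stmt16A.bfun_sat h3 g 0 (Stmt16A.zero_ne_neg_one h3)
        · rcases eq_or_ne i (-1 : Fin n) with rfl | hi1
          · refine iff_of_true ?_ (Or.inl rfl)
            rw [show (-1 : Fin n) = 0 - 1 from (zero_sub 1).symm,
              Stmt16A.sat_flip_pred g b 0 h3, not_not, zero_sub]
            exact (Stmt16A.bfun_last_sat h3 g).mpr hS
          · refine iff_of_false (not_not_intro ?_) (by rintro (h|h); exacts [hi1 h, hi0 h])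
            rw [Stmt16A.sat_flip_other g b 0 i hi0 (by rw [zero_sub]; exact hi1)]
            exact Stmt16A.bfun_sat h3 g i hi1
      | succ t ih =>
        intro i
        have d21 : -((t/2 + 2 : ℕ) : Fin n) ≠ -((t/2 : ℕ) : Fin n) :=
          Stmt16A.neg_cast_two_ne h3 (t/2)
        have d10 : -((t/2 + 1 : ℕ) : Fin n) ≠ -((t/2 : ℕ) : Fin n) :=
          Stmt16A.neg_cast_succ_ne h3 (t/2)
        have d21' : -((t/2 + 2 : ℕ) : Fin n) ≠ -((t/2 + 1 : ℕ) : Fin n) :=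
          Stmt16A.neg_cast_succ_ne h3 (t/2 + 1)
        rcases Nat.mod_two_eq_zero_or_one t with hpar | hpar
        · -- t even
          have hva : v t = -((t/2 + 1 : ℕ) : Fin n) := by
            simp only [hvdef]; rw [if_pos hpar]
          have hA2 : e1 t = v t := by
            rw [hva]; simp only [he1def]; congr 1; congr 1; omega
          have hA3 : e2 t = -((t/2 : ℕ) : Fin n) := rfl
          have hA4 : e1 (t+1) = -((t/2 + 2 : ℕ) : Fin n) := by
            simp only [he1def]; congr 1; congr 1; omega
          have hA5 : e2 (t+1) = -((t/2 : ℕ) : Fin n) := by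
            simp only [he2def]; congr 1; congr 1; omega
          have hA6 : v t - 1 = -((t/2 + 2 : ℕ) : Fin n) := by
            rw [hva]; push_cast; ring
          rcases eq_or_ne i (v t) with rfl | hi1
          · rw [hstep t, Stmt16A.sat_flip_self g (f t) (v t) h3, not_not]
            have hnot : ¬ Stmt16A.SatP g (f t) (v t) := (ih (v t)).mpr (Or.inl hA2.symm)
            refine iff_of_false (fun hs => hnot hs) ?_
            rw [hva, hA4, hA5]
            rintro (h|h)
            · exact d21' h.symm
            · exact d10 h
          · rcases eq_or_ne i (v t - 1) with rfl | hi2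
            · rw [hstep t, Stmt16A.sat_flip_pred g (f t) (v t) h3, not_not]
              have hsat : Stmt16A.SatP g (f t) (v t - 1) := by
                by_contra hns
                rcases (ih _).mp hns with h | h
                · exact Stmt16A.sub_one_ne h3 (v t) (h.trans hA2)
                · rw [hA6, hA3] at h; exact d21 h
              exact iff_of_true hsat (Or.inl (by rw [hA6, hA4]))
            · rw [hstep t, Stmt16A.sat_flip_other g (f t) (v t) i hi1 hi2, ih i]
              rw [hA2, hA3, hA4, hA5]
              constructor
              · rintro (h|h)
                · exact absurd h hi1
                · exact Or.inr h
              · rintro (h|h)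
                · exact absurd h (by rw [hA6] at hi2; exact hi2)
                · exact Or.inr h
        · -- t odd
          have hva : v t = -((t/2 : ℕ) : Fin n) := by
            simp only [hvdef]; rw [if_neg (by omega)]
          have hB2 : e2 t = v t := hva.symm
          have hB3 : e1 t = -((t/2 + 2 : ℕ) : Fin n) := by
            simp only [he1def]; congr 1; congr 1; omega
          have hB4 : e1 (t+1) = -((t/2 + 2 : ℕ) : Fin n) := by
            simp only [he1def]; congr 1; congr 1; omega
          have hB5 : e2 (t+1) = -((t/2 + 1 : ℕ) : Fin n) := by
            simp only [he2def]; congr 1; congr 1; omega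
          have hB6 : v t - 1 = -((t/2 + 1 : ℕ) : Fin n) := by
            rw [hva]; push_cast; ring
          rcases eq_or_ne i (v t) with rfl | hi1
          · rw [hstep t, Stmt16A.sat_flip_self g (f t) (v t) h3, not_not]
            have hnot : ¬ Stmt16A.SatP g (f t) (v t) := (ih (v t)).mpr (Or.inr hB2.symm)
            refine iff_of_false (fun hs => hnot hs) ?_
            rw [hva, hB4, hB5]
            rintro (h|h)
            · exact d21 h.symm
            · exact d10 h.symm
          · rcases eq_or_ne i (v t - 1) with rfl | hi2
            · rw [hstep t, Stmt16A.sat_flip_pred g (f t) (v t) h3, not_not]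
              have hsat : Stmt16A.SatP g (f t) (v t - 1) := by
                by_contra hns
                rcases (ih _).mp hns with h | h
                · rw [hB6, hB3] at h; exact d21' h.symm
                · exact Stmt16A.sub_one_ne h3 (v t) (h.trans hB2)
              exact iff_of_true hsat (Or.inr (by rw [hB6, hB5]))
            · rw [hstep t, Stmt16A.sat_flip_other g (f t) (v t) i hi1 hi2, ih i]
              rw [hB2, hB3, hB4, hB5]
              constructor
              · rintro (h|h)
                · exact Or.inl h
                · exact absurd h hi1
              · rintro (h|h)
                · exact Or.inl h
                · exact absurd h (by rw [hB6] at hi2; exact hi2)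
    have hleg : ∀ t, ¬ Stmt16A.SatP g (f t) (v t) := by
      intro t
      rcases Nat.mod_two_eq_zero_or_one t with hpar | hpar
      · refine (inv t (v t)).mpr (Or.inl ?_)
        simp only [hvdef, he1def]; rw [if_pos hpar]; congr 1; congr 1; omega
      · refine (inv t (v t)).mpr (Or.inr ?_)
        simp only [hvdef, he2def]; rw [if_neg (by omega)]
    have cf2 : ∀ r, r ≤ n → ∀ i : Fin n,
        f (2*r) i = s0 i + (if i = -((r : ℕ) : Fin n) then 1 else 0)
          + (if i = 0 then 1 else 0) := by
      intro r
      induction r with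
      | zero =>
        intro _ i
        have h0 : -(((0:ℕ) : ℕ) : Fin n) = (0 : Fin n) := by norm_num
        rw [h0]
        by_cases hi : i = (0 : Fin n)
        · rw [if_pos hi]
          exact (Stmt16A.fin2_aa _).symm
        · rw [if_neg hi]
          simp only [add_zero]
          rfl
      | succ r ih =>
        intro hr i
        have ha : v (2*r) = -((r+1 : ℕ) : Fin n) := by
          simp only [hvdef]; rw [if_pos (by omega)]; congr 1; congr 1; omega
        have hc : v (2*r+1) = -((r : ℕ) : Fin n) := by
          simp only [hvdef]; rw [if_neg (by omega)]; congr 1; congr 1; omega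
        have hac : -((r : ℕ) : Fin n) ≠ -((r+1 : ℕ) : Fin n) :=
          (Stmt16A.neg_cast_succ_ne h3 r).symm
        have h21 : f (2*(r+1)) i
            = Function.update (f (2*r+1)) (v (2*r+1)) (f (2*r+1) (v (2*r+1)) + 1) i := by
          have h22 : 2*(r+1) = (2*r+1)+1 := by ring
          rw [h22, hstep (2*r+1)]
        rw [h21, hstep (2*r), ha, hc]
        rcases eq_or_ne i (-((r : ℕ) : Fin n)) with rfl | hiC
        · rw [Function.update_self, Function.update_of_ne hac, ih (by omega) _,
            if_pos rfl, if_neg hac]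
          generalize s0 _ = x
          generalize (if -((r : ℕ) : Fin n) = (0:Fin n) then (1:Fin 2) else 0) = y
          revert x y; decide
        · rcases eq_or_ne i (-((r+1 : ℕ) : Fin n)) with rfl | hiA
          · rw [Function.update_of_ne hiC, Function.update_self, ih (by omega) _,
              if_neg hiC, if_pos rfl]
            generalize s0 _ = x
            generalize (if -((r+1 : ℕ) : Fin n) = (0:Fin n) then (1:Fin 2) else 0) = y
            revert x y; decide
          · rw [Function.update_of_ne hiC, Function.update_of_ne hiA, ih (by omega) i,
              if_neg hiC, if_neg hiA]
    have hTper : Stmt16A.seq s0 v (2*n) = Stmt16A.seq s0 v 0 := by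
      funext i
      show f (2*n) i = f 0 i
      have h1 := cf2 n (le_refl n) i
      have h2 : -((n : ℕ) : Fin n) = (0 : Fin n) := by rw [Fin.natCast_self, neg_zero]
      rw [h1, h2]
      by_cases hi : i = (0 : Fin n)
      · rw [if_pos hi]
        exact Stmt16A.fin2_aa _
      · rw [if_neg hi]
        simp only [add_zero]
        rfl
    exact assemble s0 v (2*n) (by omega) hTper (fun t _ => hleg t)
  · -- odd parity: single rotating defect
    set v : ℕ → Fin n := fun t => -((t + 1 : ℕ) : Fin n) with hvdef
    set f := Stmt16A.seq b v with hfdef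
    have hstep : ∀ t, f (t+1) = Function.update (f t) (v t) (f t (v t) + 1) := fun t => rfl
    have hvsucc : ∀ t, v (t+1) = v t - 1 := by
      intro t; simp only [hvdef]; push_cast; ring
    have inv : ∀ t (i : Fin n), ¬ Stmt16A.SatP g (f t) i ↔ i = v t := by
      intro t
      induction t with
      | zero =>
        intro i
        have hv0 : v 0 = -1 := by simp only [hvdef]; norm_num
        rcases eq_or_ne i (v 0) with rfl | hne
        · refine iff_of_true ?_ rfl
          rw [hv0]
          intro hsat
          exact hS ((Stmt16A.bfun_last_sat h3 g).mp hsat)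
        · refine iff_of_false (not_not_intro ?_) hne
          exact Stmt16A.bfun_sat h3 g i (by rw [← hv0]; exact hne)
      | succ t ih =>
        intro i
        rw [hstep t, hvsucc t]
        rcases eq_or_ne i (v t) with rfl | hi1
        · rw [Stmt16A.sat_flip_self g (f t) (v t) h3, not_not]
          have hnot : ¬ Stmt16A.SatP g (f t) (v t) := (ih (v t)).mpr rfl
          exact iff_of_false (fun hs => hnot hs)
            (fun hh => Stmt16A.sub_one_ne h3 (v t) hh.symm)
        · rcases eq_or_ne i (v t - 1) with rfl | hi2
          · rw [Stmt16A.sat_flip_pred g (f t) (v t) h3, not_not]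
            have hsat : Stmt16A.SatP g (f t) (v t - 1) := by
              by_contra hns
              exact Stmt16A.sub_one_ne h3 (v t) ((ih _).mp hns)
            exact iff_of_true hsat rfl
          · rw [Stmt16A.sat_flip_other g (f t) (v t) i hi1 hi2, ih i]
            exact iff_of_false hi1 hi2
    have hvval : ∀ t, t + 1 ≤ n → (v t).val = n - (t+1) := by
      intro t ht
      simp only [hvdef]
      exact Stmt16A.neg_cast_val h3 t ht
    have cf : ∀ t, t ≤ n → ∀ i : Fin n,
        f t i = b i + (if n - t ≤ i.val then 1 else 0) := by
      intro t
      induction t with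
      | zero =>
        intro _ i
        have := i.isLt
        rw [if_neg (by omega), add_zero]
        rfl
      | succ t ih =>
        intro ht i
        have hval : (v t).val = n - (t+1) := hvval t ht
        rw [hstep t]
        rcases eq_or_ne i (v t) with rfl | hi
        · rw [Function.update_self, ih (by omega) (v t), hval,
            if_neg (show ¬ (n - t ≤ n - (t+1)) by omega), if_pos (by omega), add_zero]
        · have hne : i.val ≠ n - (t+1) := by
            intro hh; exact hi (Fin.ext (by rw [hval, hh]))
          rw [Function.update_of_ne hi, ih (by omega) i]
          have hiv := i.isLt
          congr 1
          by_cases hcc : n - (t+1) ≤ i.val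
          · rw [if_pos hcc, if_pos (by omega)]
          · rw [if_neg hcc, if_neg (by omega)]
    have hper2 : ∀ t, t ≤ n → ∀ i, f (n + t) i = f t i + 1 := by
      intro t
      induction t with
      | zero =>
        intro _ i
        show f n i = f 0 i + 1
        rw [cf n (le_refl n) i, if_pos (by omega)]
        rfl
      | succ t ih =>
        intro ht i
        have hvp : v (n + t) = v t := by
          simp only [hvdef]
          push_cast
          rw [Fin.natCast_self]
          ring
        have h1 : f (n + (t+1)) i
            = Function.update (f (n+t)) (v t) (f (n+t) (v t) + 1) i := by
          show f ((n+t)+1) i = _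
          rw [hstep (n+t), hvp]
        rw [h1, hstep t]
        rcases eq_or_ne i (v t) with rfl | hi
        · rw [Function.update_self, Function.update_self, ih (by omega) (v t)]
        · rw [Function.update_of_ne hi, Function.update_of_ne hi, ih (by omega) i]
    have hTper : Stmt16A.seq b v (n + n) = Stmt16A.seq b v 0 := by
      funext i
      show f (n+n) i = f 0 i
      have h1 : f (n+n) i = f n i + 1 := hper2 n (le_refl n) i
      have h2 : f n i = b i + 1 := by
        rw [cf n (le_refl n) i, if_pos (by omega)]
      rw [h1, h2, Stmt16A.fin2_aa]
      rfl
    exact assemble b v (n + n) (by omega) hTper (fun t _ => (inv t (v t)).mpr rfl)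
end

section
/- Let ε ≥ 1 and k ≥ 2, let Γ be an asymmetric coordination game on a finite simple graph G = (V,E) with unit edge weights (w_e = 1 for all e ∈ E), equal-split distribution rule and no individual preferences, and let M ⊆ E be a matching such that S_i ∩ S_j ≠ ∅ for every edge {i,j} ∈ M. Then every (ε,k)-equilibrium s of Γ satisfies u(s) ≥ |M|/(2ε); consequently, if M is nonempty, then u(s*)/u(s) ≤ 2ε·|E|/|M| for every strategy profile s*. -/
open Finset
open scoped Classical

variable {V : Type*}

lemma utilA_nonneg [Fintype V] (G : SimpleGraph V) {c : ℕ} (s : V → Fin c) (i : V) :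
    0 ≤ utilA G (fun _ _ => 1) s i := by
  unfold utilA
  apply Finset.sum_nonneg
  intro j _
  split <;> norm_num

lemma utilA_ge_half [Fintype V] (G : SimpleGraph V) {c : ℕ} (s : V → Fin c) {i j : V}
    (hj : j ∈ G.neighborFinset i) (hsij : s i = s j) :
    (1:ℝ)/2 ≤ utilA G (fun _ _ => 1) s i := by
  unfold utilA
  have := Finset.single_le_sum (f := fun j' => if s i = s j' then (1:ℝ)/2 else 0)
    (fun j' _ => by split <;> norm_num) hj
  simpa [hsij] using this

lemma welfareA_le_edges [Fintype V] (G : SimpleGraph V) {c : ℕ} (s : V → Fin c) :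
    welfareA G (fun _ _ => 1) s ≤ (G.edgeFinset.card : ℝ) := by
  have h1 : ∀ i, utilA G (fun _ _ => 1) s i ≤ (G.degree i : ℝ) / 2 := by
    intro i
    unfold utilA
    have : ∀ j ∈ G.neighborFinset i, (if s i = s j then (1:ℝ)/2 else 0) ≤ 1/2 := by
      intro j _; split <;> norm_num
    calc (∑ j ∈ G.neighborFinset i, if s i = s j then (1:ℝ)/2 else 0)
        ≤ ∑ j ∈ G.neighborFinset i, (1:ℝ)/2 := Finset.sum_le_sum this
      _ = (G.degree i : ℝ) / 2 := by
          rw [Finset.sum_const, SimpleGraph.card_neighborFinset_eq_degree]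
          ring
  have h2 : welfareA G (fun _ _ => 1) s ≤ ∑ i, (G.degree i : ℝ) / 2 :=
    Finset.sum_le_sum (fun i _ => h1 i)
  have h3 : (∑ i, G.degree i) = 2 * G.edgeFinset.card := by
    simpa using G.sum_degrees_eq_twice_card_edges
  calc welfareA G (fun _ _ => 1) s ≤ ∑ i, (G.degree i : ℝ) / 2 := h2
    _ = ((∑ i, G.degree i : ℕ) : ℝ) / 2 := by push_cast; rw [Finset.sum_div]
    _ = (G.edgeFinset.card : ℝ) := by rw [h3]; push_cast; ring

theorem stmt17 [Fintype V] (G : SimpleGraph V)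
    (ε : ℝ) (hε : 1 ≤ ε) (k : ℕ) (hk : 2 ≤ k)
    (c : ℕ) (St : V → Finset (Fin c)) (hSt : ∀ i, (St i).Nonempty)
    (M : Finset (Sym2 V))
    (hMsub : ∀ e ∈ M, e ∈ G.edgeFinset)
    (hMmatch : ∀ e ∈ M, ∀ f ∈ M, e ≠ f → ∀ v, v ∈ e → v ∉ f)
    (hMcc : ∀ e ∈ M, ∀ i j, e = Sym2.mk i j → (St i ∩ St j).Nonempty)
    (s : V → Fin c) (hsv : ∀ i, s i ∈ St i)
    (hs : IsEpsKEq G (fun _ _ => 1) St ε k s) :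
    (M.card : ℝ) / (2 * ε) ≤ welfareA G (fun _ _ => 1) s ∧
      (M.Nonempty → ∀ sstar : V → Fin c, (∀ i, sstar i ∈ St i) →
        welfareA G (fun _ _ => 1) sstar / welfareA G (fun _ _ => 1) s ≤
          2 * ε * (G.edgeFinset.card : ℝ) / (M.card : ℝ)) := by
  classical
  have hε0 : (0:ℝ) < ε := lt_of_lt_of_le one_pos hε
  -- vertex set of an edge
  set T : Sym2 V → Finset V := fun e => Finset.univ.filter (· ∈ e) with hT
  -- per-edge bound
  have key : ∀ e ∈ M, (1:ℝ)/2 ≤ ε * ∑ v ∈ T e, utilA G (fun _ _ => 1) s v := by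
    intro e he
    induction e using Sym2.ind with
    | _ i j =>
    have hadj : G.Adj i j := by
      have := hMsub _ he
      rwa [SimpleGraph.mem_edgeFinset, SimpleGraph.mem_edgeSet] at this
    have hij : i ≠ j := hadj.ne
    obtain ⟨t, ht⟩ := hMcc _ he i j rfl
    rw [Finset.mem_inter] at ht
    set s' : V → Fin c := Function.update (Function.update s i t) j t with hs'
    have hs'i : s' i = t := by simp [hs', Function.update, hij]
    have hs'j : s' j = t := by simp [hs']
    have hKcard : ({i, j} : Finset V).card ≤ k := by
      have : ({i, j} : Finset V).card ≤ 2 := Finset.card_insert_le _ _ |>.trans (by simp)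
      omega
    obtain ⟨j0, hj0K, hj0⟩ := hs {i, j} ⟨i, by simp⟩ hKcard s'
      (by intro v hv; rcases Finset.mem_insert.mp hv with rfl | hv
          · rw [hs'i]; exact ht.1
          · rw [Finset.mem_singleton.mp hv, hs'j]; exact ht.2)
      (by intro v hv
          simp only [Finset.mem_insert, Finset.mem_singleton, not_or] at hv
          simp [hs', Function.update, hv.1, hv.2])
    have hTeq : T (Sym2.mk i j) = {i, j} := by
      ext v; simp [hT, Sym2.mem_iff]
    have hhalf : (1:ℝ)/2 ≤ ε * utilA G (fun _ _ => 1) s j0 := by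
      rcases Finset.mem_insert.mp hj0K with rfl | h
      · have : (1:ℝ)/2 ≤ utilA G (fun _ _ => 1) s' j0 :=
          utilA_ge_half G s' ((G.mem_neighborFinset j0 j).mpr hadj) (by rw [hs'i, hs'j])
        linarith [this.trans hj0]
      · rw [Finset.mem_singleton] at h; subst h
        have : (1:ℝ)/2 ≤ utilA G (fun _ _ => 1) s' j0 :=
          utilA_ge_half G s' ((G.mem_neighborFinset j0 i).mpr hadj.symm) (by rw [hs'i, hs'j])
        linarith [this.trans hj0]
    have hsum : utilA G (fun _ _ => 1) s j0 ≤ ∑ v ∈ T (Sym2.mk i j), utilA G (fun _ _ => 1) s v := by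
      rw [hTeq]
      exact Finset.single_le_sum (fun v _ => utilA_nonneg G s v) hj0K
    calc (1:ℝ)/2 ≤ ε * utilA G (fun _ _ => 1) s j0 := hhalf
      _ ≤ ε * ∑ v ∈ T (Sym2.mk i j), utilA G (fun _ _ => 1) s v :=
          mul_le_mul_of_nonneg_left hsum hε0.le
  -- disjointness: T e pairwise disjoint on M
  have hdisj : ∀ e ∈ M, ∀ f ∈ M, e ≠ f → Disjoint (T e) (T f) := by
    intro e he f hf hef
    rw [Finset.disjoint_left]
    intro v hv hv'
    simp only [hT, Finset.mem_filter] at hv hv'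
    exact hMmatch e he f hf hef v hv.2 hv'.2
  have hbiUnion : ∑ e ∈ M, ∑ v ∈ T e, utilA G (fun _ _ => 1) s v
      ≤ welfareA G (fun _ _ => 1) s := by
    rw [← Finset.sum_biUnion hdisj]
    exact Finset.sum_le_sum_of_subset_of_nonneg (Finset.subset_univ _)
      (fun v _ _ => utilA_nonneg G s v)
  have hlow : (M.card : ℝ) / (2 * ε) ≤ welfareA G (fun _ _ => 1) s := by
    have h1 : (M.card : ℝ) * (1/2) ≤ ε * welfareA G (fun _ _ => 1) s := by
      calc (M.card : ℝ) * (1/2) = ∑ _e ∈ M, (1:ℝ)/2 := by rw [Finset.sum_const]; ring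
        _ ≤ ∑ e ∈ M, ε * ∑ v ∈ T e, utilA G (fun _ _ => 1) s v := Finset.sum_le_sum key
        _ = ε * ∑ e ∈ M, ∑ v ∈ T e, utilA G (fun _ _ => 1) s v := by rw [Finset.mul_sum]
        _ ≤ ε * welfareA G (fun _ _ => 1) s := mul_le_mul_of_nonneg_left hbiUnion hε0.le
    rw [div_le_iff₀ (by positivity)]
    nlinarith
  refine ⟨hlow, ?_⟩
  intro hM sstar _
  have hMpos : (0:ℝ) < M.card := by
    exact_mod_cast Finset.card_pos.mpr hM
  have hdenpos : (0:ℝ) < (M.card : ℝ) / (2 * ε) := by positivity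
  have hwpos : (0:ℝ) < welfareA G (fun _ _ => 1) s := lt_of_lt_of_le hdenpos hlow
  have hEnn : (0:ℝ) ≤ (G.edgeFinset.card : ℝ) := by positivity
  calc welfareA G (fun _ _ => 1) sstar / welfareA G (fun _ _ => 1) s
      ≤ (G.edgeFinset.card : ℝ) / ((M.card : ℝ) / (2 * ε)) :=
        div_le_div₀ hEnn (welfareA_le_edges G sstar) hdenpos hlow
    _ = 2 * ε * (G.edgeFinset.card : ℝ) / (M.card : ℝ) := by
        field_simp
end

section
/- Let Γ be a symmetric clustering game on a finite simple graph G with c ≥ 2 colors and a positive distribution rule α with maximum disparity ᾱ, and let s be a pure Nash equilibrium of Γ. Then: (a) for every edge {i,j} ∈ E, w_{ij} ≤ (1 + ᾱ)·min{u_i(s), u_j(s)}; and (b) for every player i and every color k ∈ [c], u_i(s) ≥ q_i(k). -/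
open Finset
open scoped Classical

variable {V : Type*}

theorem stmt18 [Fintype V] (G : SimpleGraph V) (coord : V → V → Prop)
    (hcoord : ∀ i j, coord i j ↔ coord j i)
    (c : ℕ) (hc : 2 ≤ c)
    (α w : V → V → ℝ) (q : V → Fin c → ℝ)
    (hα : ∀ i j, G.Adj i j → 0 < α i j)
    (hw : ∀ i j, 0 ≤ w i j) (hwsymm : ∀ i j, w i j = w j i)
    (hq : ∀ i k, 0 ≤ q i k)
    (s : V → Fin c) (hs : IsNash G coord α w q s) :
    (∀ i j, G.Adj i j →
        w i j ≤ (1 + maxDisparity G α) *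
          min (util G coord α w q s i) (util G coord α w q s j)) ∧
    (∀ (i : V) (k : Fin c), q i k ≤ util G coord α w q s i) := by
  classical
  have hterm : ∀ (t : V → Fin c) (i j : V), j ∈ G.neighborFinset i →
      0 ≤ (if (coord i j ∧ t i = t j) ∨ (¬ coord i j ∧ t i ≠ t j)
        then α i j / (α i j + α j i) * w i j else 0) := by
    intro t i j hj
    rw [SimpleGraph.mem_neighborFinset] at hj
    have h1 := hα i j hj
    have h2 := hα j i hj.symm
    have h3 := hw i j
    split
    · positivity
    · exact le_refl 0
  have hutil_nonneg : ∀ (t : V → Fin c) (i : V), 0 ≤ util G coord α w q t i := by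
    intro t i
    have := Finset.sum_nonneg (fun j hj => hterm t i j hj)
    have hq' := hq i (t i)
    unfold util
    linarith
  -- key: each player can secure the share of the edge
  have key : ∀ i j, G.Adj i j →
      α i j / (α i j + α j i) * w i j ≤ util G coord α w q s i := by
    intro i j hij
    obtain ⟨k, hk⟩ : ∃ k : Fin c, (coord i j ∧ k = s j) ∨ (¬ coord i j ∧ k ≠ s j) := by
      by_cases hco : coord i j
      · exact ⟨s j, Or.inl ⟨hco, rfl⟩⟩
      · obtain ⟨k, hk⟩ := Fintype.exists_ne_of_one_lt_card
          (by simpa using lt_of_lt_of_le one_lt_two hc) (s j)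
        exact ⟨k, Or.inr ⟨hco, hk⟩⟩
    have hmem : j ∈ G.neighborFinset i := by simpa using hij
    set t := Function.update s i k with ht
    have hti : t i = k := Function.update_self i k s
    have htj : t j = s j := Function.update_of_ne (G.ne_of_adj hij).symm k s
    have hcond : (coord i j ∧ t i = t j) ∨ (¬ coord i j ∧ t i ≠ t j) := by
      rw [hti, htj]; exact hk
    have hsingle := Finset.single_le_sum (fun j' hj' => hterm t i j' hj') hmem
    have hstep : α i j / (α i j + α j i) * w i j ≤ util G coord α w q t i := by
      unfold util
      rw [if_pos hcond] at hsingle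
      have hq' := hq i (t i)
      linarith
    exact hstep.trans (hs i k)
  have hbd : ∀ i j, G.Adj i j → α j i / α i j ≤ maxDisparity G α := by
    intro i j hij
    have : Nonempty {p : V × V // G.Adj p.1 p.2} := ⟨⟨(j, i), hij.symm⟩⟩
    exact le_ciSup (f := fun p : {p : V × V // G.Adj p.1 p.2} => α p.1.1 p.1.2 / α p.1.2 p.1.1)
      (Set.Finite.bddAbove (Set.finite_range _)) ⟨(j, i), hij.symm⟩
  have hone : ∀ i j, G.Adj i j → w i j ≤ (1 + maxDisparity G α) * util G coord α w q s i := by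
    intro i j hij
    have ha := hα i j hij
    have hb := hα j i hij.symm
    have hD := hbd i j hij
    have hD0 : 0 ≤ maxDisparity G α := le_trans (by positivity) hD
    have h1 : α i j + α j i ≤ (1 + maxDisparity G α) * α i j := by
      rw [div_le_iff₀ ha] at hD
      nlinarith
    have h2 : w i j ≤ (1 + maxDisparity G α) * (α i j / (α i j + α j i) * w i j) := by
      have hab : 0 < α i j + α j i := by linarith
      rw [div_mul_eq_mul_div, mul_div_assoc', le_div_iff₀ hab]
      nlinarith [hw i j]
    exact h2.trans (by nlinarith [key i j hij, hw i j])
  constructor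
  · intro i j hij
    have hD0 : 0 ≤ 1 + maxDisparity G α := by
      have := hbd j i hij.symm
      have := hα i j hij
      have := hα j i hij.symm
      nlinarith [div_pos (hα i j hij) (hα j i hij.symm)]
    rw [mul_min_of_nonneg _ _ hD0]
    refine le_min (hone i j hij) ?_
    rw [hwsymm i j]
    exact hone j i hij.symm
  · intro i k
    have hmono : q i k ≤ util G coord α w q (Function.update s i k) i := by
      have hsum := Finset.sum_nonneg (fun j hj => hterm (Function.update s i k) i j hj)
      have hqq : q i k = q i (Function.update s i k i) := by rw [Function.update_self]
      rw [hqq]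
      unfold util
      linarith
    exact hmono.trans (hs i k)
end
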